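/- Let H be a complex inner product space, let r ≥ 0 be a real number, let m ≥ 1 be a natural number and let ε > 0. Let (v_k)_{k∈ℕ} and (w_k)_{k∈ℕ} be finitely supported families of vectors of H such that ⟨v_j, v_k⟩ = 0 and ⟨w_j, w_k⟩ = 0 whenever j ≠ k, and ‖w_k‖² ≤ r²·(k² + k·m² + m³)·‖v_k‖² for every k ∈ ℕ. Then ‖∑_{k∈ℕ} (exp(−ε·k) − exp(−ε·(k+m)))·w_k‖² ≤ 3·r²·m³·∑_{k∈ℕ} ‖v_k‖². -/

import Mathlib

open Finset in
private lemma pyth_aux {H : Type*} [NormedAddCommGroup H] [InnerProductSpace ℂ H]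
    (s : Finset ℕ) (u : ℕ → H)
    (h : ∀ j k : ℕ, j ≠ k → (inner ℂ (u j) (u k) : ℂ) = 0) :
    ‖∑ k ∈ s, u k‖ ^ 2 = ∑ k ∈ s, ‖u k‖ ^ 2 := by
  have h1 : (inner ℂ (∑ k ∈ s, u k) (∑ k ∈ s, u k) : ℂ)
      = ∑ j ∈ s, (inner ℂ (u j) (u j) : ℂ) := by
    rw [sum_inner]
    refine Finset.sum_congr rfl fun j hj => ?_
    rw [inner_sum, Finset.sum_eq_single_of_mem j hj]
    intro k _ hk
    exact h j k (Ne.symm hk)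
  have h2 : ((‖∑ k ∈ s, u k‖ : ℂ)) ^ 2 = ∑ j ∈ s, ((‖u j‖ : ℂ)) ^ 2 := by
    simp only [inner_self_eq_norm_sq_to_K] at h1; exact_mod_cast h1
  exact_mod_cast h2

private lemma exp_mul_le_one {x : ℝ} (hx : 0 ≤ x) : x * Real.exp (-x) ≤ 1 := by
  have h1 : x ≤ Real.exp x := (Real.add_one_le_exp x).trans' (by linarith)
  have h2 : 0 < Real.exp x := Real.exp_pos x
  rw [Real.exp_neg, ← div_eq_mul_inv, div_le_one h2]
  exact h1

private lemma coeff_bound (ε : ℝ) (hε : 0 < ε) (m : ℕ) (hm : 1 ≤ m) (k : ℕ) :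
    (Real.exp (-(ε * k)) - Real.exp (-(ε * (k + m)))) ^ 2
      * ((k : ℝ) ^ 2 + (k : ℝ) * (m : ℝ) ^ 2 + (m : ℝ) ^ 3) ≤ 3 * (m : ℝ) ^ 3 := by
  set a : ℝ := Real.exp (-(ε * k)) with ha_def
  set d : ℝ := 1 - Real.exp (-(ε * m)) with hd_def
  have hsplit : Real.exp (-(ε * (k + m))) = a * Real.exp (-(ε * m)) := by
    rw [ha_def, ← Real.exp_add]; congr 1; ring
  have hc : Real.exp (-(ε * k)) - Real.exp (-(ε * (k + m))) = a * d := by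
    rw [hsplit, hd_def]; ring
  have ha0 : 0 ≤ a := (Real.exp_pos _).le
  have ha1 : a ≤ 1 := Real.exp_le_one_iff.mpr (neg_nonpos.mpr (by positivity))
  have hd0 : 0 ≤ d := by
    have : Real.exp (-(ε * m)) ≤ 1 := Real.exp_le_one_iff.mpr (neg_nonpos.mpr (by positivity))
    linarith
  have hd1 : d ≤ 1 := by
    have : 0 < Real.exp (-(ε * m)) := Real.exp_pos _
    linarith
  have hd2 : d ≤ ε * m := by
    have := Real.add_one_le_exp (-(ε * m))
    linarith
  have hkey : ε * k * a ≤ 1 := by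
    have := exp_mul_le_one (x := ε * k) (by positivity)
    simpa [ha_def, mul_assoc] using this
  have hm1 : (1 : ℝ) ≤ (m : ℝ) := by exact_mod_cast hm
  have hk0 : (0 : ℝ) ≤ (k : ℝ) := Nat.cast_nonneg k
  have had0 : 0 ≤ a * d := mul_nonneg ha0 hd0
  have hadle : a * d ≤ 1 := by nlinarith
  -- a * d * k ≤ m
  have hadk : a * d * k ≤ (m : ℝ) := by
    have h1 : a * d * k ≤ a * (ε * m) * k := by
      have hak : 0 ≤ a * k := by positivity
      nlinarith
    have h2 : a * (ε * m) * k = (ε * k * a) * m := by ring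
    nlinarith
  have hc2 : (a * d) ^ 2 * ((k : ℝ) ^ 2 + (k : ℝ) * (m : ℝ) ^ 2 + (m : ℝ) ^ 3)
      ≤ 3 * (m : ℝ) ^ 3 := by
    have t1 : (a * d * k) ^ 2 ≤ (m : ℝ) ^ 2 := by
      have : 0 ≤ a * d * k := by positivity
      nlinarith
    have h3 : (a * d) ^ 2 * (k : ℝ) ≤ a * d * k := by
      nlinarith [mul_nonneg (mul_nonneg had0 hk0) (sub_nonneg.mpr hadle)]
    have t2 : (a * d) ^ 2 * ((k : ℝ) * (m : ℝ) ^ 2) ≤ (m : ℝ) ^ 3 := by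
      have h5 : (a * d) ^ 2 * (k : ℝ) ≤ (m : ℝ) := h3.trans hadk
      have h6 := mul_le_mul_of_nonneg_right h5 (sq_nonneg (m : ℝ))
      calc (a * d) ^ 2 * ((k : ℝ) * (m : ℝ) ^ 2) = (a * d) ^ 2 * (k : ℝ) * (m : ℝ) ^ 2 := by ring
        _ ≤ (m : ℝ) * (m : ℝ) ^ 2 := h6
        _ = (m : ℝ) ^ 3 := by ring
    have t3 : (a * d) ^ 2 * (m : ℝ) ^ 3 ≤ (m : ℝ) ^ 3 := by
      have h7 : (a * d) ^ 2 ≤ 1 := by nlinarith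
      have h8 : (0 : ℝ) ≤ (m : ℝ) ^ 3 := by positivity
      nlinarith
    have hm23 : (m : ℝ) ^ 2 ≤ (m : ℝ) ^ 3 := by nlinarith
    have expand : (a * d) ^ 2 * ((k : ℝ) ^ 2 + (k : ℝ) * (m : ℝ) ^ 2 + (m : ℝ) ^ 3)
        = (a * d * k) ^ 2 + (a * d) ^ 2 * ((k : ℝ) * (m : ℝ) ^ 2) + (a * d) ^ 2 * (m : ℝ) ^ 3 := by
      ring
    linarith
  rw [hc]; exact hc2

/-- ε-independent norm bound `‖[L₋ₘ, e^{-εL₀}]v‖² ≤ 3 r² m³ ‖v‖²`: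
here `v k` plays the role of the component of a finite-energy vector in the
`k`-eigenspace of the conformal Hamiltonian, and `w k` that of `L₋ₘ (v k)`. -/
theorem commutator_with_semigroup_norm_bound
    {H : Type*} [NormedAddCommGroup H] [InnerProductSpace ℂ H]
    (r : ℝ) (hr : 0 ≤ r) (m : ℕ) (hm : 1 ≤ m) (ε : ℝ) (hε : 0 < ε)
    (v w : ℕ → H)
    (hv : (Function.support v).Finite) (hw : (Function.support w).Finite)
    (hvo : ∀ j k : ℕ, j ≠ k → (inner ℂ (v j) (v k) : ℂ) = 0)
    (hwo : ∀ j k : ℕ, j ≠ k → (inner ℂ (w j) (w k) : ℂ) = 0)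
    (hbound : ∀ k : ℕ, ‖w k‖ ^ 2 ≤
      r ^ 2 * ((k : ℝ) ^ 2 + (k : ℝ) * (m : ℝ) ^ 2 + (m : ℝ) ^ 3) * ‖v k‖ ^ 2) :
    ‖∑ᶠ k : ℕ, (Real.exp (-(ε * k)) - Real.exp (-(ε * (k + m)))) • w k‖ ^ 2 ≤
      3 * r ^ 2 * (m : ℝ) ^ 3 * ∑ᶠ k : ℕ, ‖v k‖ ^ 2 := by
  classical
  set c : ℕ → ℝ := fun k => Real.exp (-(ε * k)) - Real.exp (-(ε * (k + m))) with hc_def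
  set s : Finset ℕ := hv.toFinset ∪ hw.toFinset with hs_def
  have hsubw : Function.support (fun k => c k • w k) ⊆ (s : Set ℕ) := by
    intro k hk
    have : w k ≠ 0 := by
      intro h; apply hk; simp [h]
    simp [hs_def, Function.mem_support.mpr this]
  have hsubv : Function.support (fun k => ‖v k‖ ^ 2) ⊆ (s : Set ℕ) := by
    intro k hk
    have : v k ≠ 0 := by
      intro h; apply hk; simp [h]
    simp [hs_def, Function.mem_support.mpr this]
  rw [finsum_eq_sum_of_support_subset _ hsubw, finsum_eq_sum_of_support_subset _ hsubv]
  have horth : ∀ j k : ℕ, j ≠ k → (inner ℂ (c j • w j) (c k • w k) : ℂ) = 0 := by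
    intro j k hjk
    rw [RCLike.real_smul_eq_coe_smul (K := ℂ) (c j), RCLike.real_smul_eq_coe_smul (K := ℂ) (c k),
      inner_smul_left, inner_smul_right, hwo j k hjk]
    ring
  rw [pyth_aux s _ horth]
  rw [Finset.mul_sum]
  refine Finset.sum_le_sum fun k _ => ?_
  rw [norm_smul, Real.norm_eq_abs]
  have hck : |c k| ^ 2 = (c k) ^ 2 := sq_abs _
  have hcoeff := coeff_bound ε hε m hm k
  have hb := hbound k
  have hwk : 0 ≤ ‖w k‖ ^ 2 := by positivity
  have hvk : 0 ≤ ‖v k‖ ^ 2 := by positivity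
  have hc2 : 0 ≤ (c k) ^ 2 := sq_nonneg _
  have key : (c k) ^ 2 * ‖w k‖ ^ 2 ≤ 3 * r ^ 2 * (m : ℝ) ^ 3 * ‖v k‖ ^ 2 := by
    have h1 : (c k) ^ 2 * ‖w k‖ ^ 2
        ≤ (c k) ^ 2 * (r ^ 2 * ((k : ℝ) ^ 2 + (k : ℝ) * (m : ℝ) ^ 2 + (m : ℝ) ^ 3) * ‖v k‖ ^ 2) :=
      mul_le_mul_of_nonneg_left hb hc2
    have h2 : (c k) ^ 2 * (r ^ 2 * ((k : ℝ) ^ 2 + (k : ℝ) * (m : ℝ) ^ 2 + (m : ℝ) ^ 3) * ‖v k‖ ^ 2)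
        = (c k) ^ 2 * ((k : ℝ) ^ 2 + (k : ℝ) * (m : ℝ) ^ 2 + (m : ℝ) ^ 3) * (r ^ 2 * ‖v k‖ ^ 2) := by
      ring
    have h3 : (c k) ^ 2 * ((k : ℝ) ^ 2 + (k : ℝ) * (m : ℝ) ^ 2 + (m : ℝ) ^ 3) * (r ^ 2 * ‖v k‖ ^ 2)
        ≤ 3 * (m : ℝ) ^ 3 * (r ^ 2 * ‖v k‖ ^ 2) := by
      apply mul_le_mul_of_nonneg_right hcoeff (by positivity)
    calc (c k) ^ 2 * ‖w k‖ ^ 2 ≤ _ := h1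
      _ = _ := h2
      _ ≤ 3 * (m : ℝ) ^ 3 * (r ^ 2 * ‖v k‖ ^ 2) := h3
      _ = 3 * r ^ 2 * (m : ℝ) ^ 3 * ‖v k‖ ^ 2 := by ring
  calc (|c k| * ‖w k‖) ^ 2 = (c k) ^ 2 * ‖w k‖ ^ 2 := by rw [mul_pow, hck]
    _ ≤ 3 * r ^ 2 * (m : ℝ) ^ 3 * ‖v k‖ ^ 2 := key
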